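/- Let K ⊆ ℝⁿ be a closed set and let G : K → Set ℝ be an upper semicontinuous set-valued map such that G(x) is a nonempty, compact, convex subset of (−∞, 0) for every x ∈ K. Then there exists a continuous function g : K → (−∞, 0) such that 0 > g(x) ≥ sup G(x) for every x ∈ K. -/

import Mathlib

open Metric Set Filter MeasureTheory
open scoped Pointwise RealInnerProductSpace Topology

variable {E : Type*} [NormedAddCommGroup E] [NormedSpace ℝ E]

/-- Admissible solution domains: `[0,T]`, `[0,T)`, or `[0,∞)`. -/
def SolDomain (D : Set ℝ) : Prop :=
  (∃ T : ℝ, 0 ≤ T ∧ D = Set.Icc 0 T) ∨ (∃ T : ℝ, 0 < T ∧ D = Set.Ico 0 T) ∨ D = Set.Ici 0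

/-- `φ` is a (locally absolutely continuous) solution of `ẋ ∈ F x` on `D`,
expressed in integral form: `φ t = φ 0 + ∫₀ᵗ v`, with `v t ∈ F (φ t)` a.e. on `D`. -/
def IsSolutionOn (F : E → Set E) (φ : ℝ → E) (D : Set ℝ) : Prop :=
  SolDomain D ∧ ∃ v : ℝ → E,
    (∀ t ∈ D, MeasureTheory.IntegrableOn v (Set.Icc 0 t)) ∧
    (∀ t ∈ D, φ t = φ 0 + ∫ s in (0:ℝ)..t, v s) ∧
    (∀ᵐ t ∂(MeasureTheory.volume.restrict D), v t ∈ F (φ t))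

/-- Safety: no solution starting in `Xo` ever reaches `Xu`. -/
def Safe (F : E → Set E) (Xo Xu : Set E) : Prop :=
  ∀ (φ : ℝ → E) (D : Set ℝ), IsSolutionOn F φ D → φ 0 ∈ Xo → ∀ t ∈ D, φ t ∉ Xu

/-- Forward invariance of `K`. -/
def ForwardInvariant (F : E → Set E) (K : Set E) : Prop :=
  ∀ (φ : ℝ → E) (D : Set ℝ), IsSolutionOn F φ D → φ 0 ∈ K → ∀ t ∈ D, φ t ∈ K

/-- Image of a set under a set-valued map: `F(S) = ⋃_{y ∈ S} F(y)`. -/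
def svImage (F : E → Set E) (S : Set E) : Set E := ⋃ y ∈ S, F y

/-- Right-hand side of the strongly perturbed system `Σ^s_ε`:
`conv (F (x + ε(x)𝔹)) + ε(x)𝔹`. -/
def strongPert (F : E → Set E) (ε : E → ℝ) (x : E) : Set E :=
  convexHull ℝ (svImage F (Metric.closedBall x (ε x))) + Metric.closedBall (0:E) (ε x)

/-- Right-hand side of the (ordinary) perturbed system `Σ_ε`: `F x + ε(x)𝔹`. -/
def pert (F : E → Set E) (ε : E → ℝ) (x : E) : Set E :=
  F x + Metric.closedBall (0:E) (ε x)

def RobustlySafe (F : E → Set E) (Xo Xu : Set E) : Prop :=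
  ∃ ε : E → ℝ, Continuous ε ∧ (∀ x, 0 < ε x) ∧ Safe (pert F ε) Xo Xu

def StronglyRobustlySafe (F : E → Set E) (Xo Xu : Set E) : Prop :=
  ∃ ε : E → ℝ, Continuous ε ∧ (∀ x, 0 < ε x) ∧ Safe (strongPert F ε) Xo Xu

def UniformlyStronglyRobustlySafe (F : E → Set E) (Xo Xu : Set E) : Prop :=
  ∃ ε : ℝ, 0 < ε ∧ Safe (strongPert F (fun _ => ε)) Xo Xu

/-- Upper semicontinuity of a set-valued map. -/
def UpperSemicontinuousSV (F : E → Set E) : Prop :=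
  ∀ x : E, ∀ U : Set E, IsOpen U → F x ⊆ U → ∀ᶠ y in nhds x, F y ⊆ U

/-- Lower semicontinuity of a set-valued map (sequential form). -/
def LowerSemicontinuousSV (F : E → Set E) : Prop :=
  ∀ x : E, ∀ y ∈ F x, ∀ u : ℕ → E, Filter.Tendsto u Filter.atTop (nhds x) →
    ∃ v : ℕ → E, (∀ i, v i ∈ F (u i)) ∧ Filter.Tendsto v Filter.atTop (nhds y)

set_option maxHeartbeats 1000000 in
/-- An upper semicontinuous map `G` on a closed set `K` with nonempty,
compact, convex values contained in `(-∞, 0)` admits a continuous negative function `g`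
on `K` with `0 > g(x) ≥ sup G(x)`. -/
theorem stmt13 {n : ℕ} (K : Set (EuclideanSpace ℝ (Fin n))) (hK : IsClosed K)
    (G : EuclideanSpace ℝ (Fin n) → Set ℝ)
    (hGusc : ∀ x ∈ K, ∀ U : Set ℝ, IsOpen U → G x ⊆ U → ∀ᶠ y in nhdsWithin x K, G y ⊆ U)
    (hGne : ∀ x ∈ K, (G x).Nonempty) (hGcpt : ∀ x ∈ K, IsCompact (G x))
    (hGcvx : ∀ x ∈ K, Convex ℝ (G x)) (hGneg : ∀ x ∈ K, G x ⊆ Set.Iio 0) :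
    ∃ g : EuclideanSpace ℝ (Fin n) → ℝ, ContinuousOn g K ∧
      ∀ x ∈ K, g x < 0 ∧ sSup (G x) ≤ g x := by
  classical
  have hsneg : ∀ x ∈ K, sSup (G x) < 0 := fun x hx =>
    hGneg x hx ((hGcpt x hx).sSup_mem (hGne x hx))
  obtain ⟨g, hg⟩ : ∃ g : C(↥K, ℝ), ∀ x : ↥K, g x ∈ Set.Ico (sSup (G x.1)) 0 := by
    apply exists_continuous_forall_mem_convex_of_local_const (fun x => convex_Ico _ _)
    rintro ⟨x, hx⟩
    refine ⟨sSup (G x) / 2, ?_⟩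
    have hs := hsneg x hx
    have hbdd : G x ⊆ Set.Iio (sSup (G x) / 2) := by
      intro a ha
      have h1 : a ≤ sSup (G x) := le_csSup (hGcpt x hx).bddAbove ha
      have : a < sSup (G x) / 2 := by linarith
      exact this
    have hev := hGusc x hx _ isOpen_Iio hbdd
    rw [nhdsWithin_eq_map_subtype_coe hx, Filter.eventually_map] at hev
    filter_upwards [hev] with y hy
    refine ⟨csSup_le (hGne y.1 y.2) (fun a ha => le_of_lt (hy ha)), by linarith⟩
  refine ⟨fun x => if hx : x ∈ K then g ⟨x, hx⟩ else 0, ?_, ?_⟩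
  · rw [continuousOn_iff_continuous_restrict]
    have : (K.domRestrict fun x => if hx : x ∈ K then g ⟨x, hx⟩ else 0) = g := by
      ext y; simp [Set.domRestrict, Set.restrict, y.2]
    rw [this]; exact g.continuous
  · intro x hx
    have := hg ⟨x, hx⟩
    simp only [dif_pos hx]
    exact ⟨this.2, this.1⟩
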